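/- Let W = {w₁, w₂, w₃, w₄}, let ε be a positive infinitesimal in a non-Archimedean field, and define ν₁(w₁) = 1 − 2ε + ε², ν₁(w₂) = ν₁(w₃) = ε − ε², ν₁(w₄) = ε², and ν₂(w₁) = 1 − 2ε + ε³, ν₂(w₂) = ν₂(w₃) = ε − ε³, ν₂(w₄) = ε³. With U = {w₂, w₄} and V = {w₃, w₄}: U and V are independent with respect to ν₁ (ν₁(U∩V) = ν₁(U)·ν₁(V)) but not independent with respect to ν₂, even though ν₁ ≈ ν₂ (the two measures induce the same comparison of expected values on all real-valued random variables). -/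

import Mathlib

section aux
variable {K : Type*} [Field K] [LinearOrder K] [IsStrictOrderedRing K] (ι : ℝ →+* K) (hι : Monotone ι)
include hι

lemma iota_strictMono : StrictMono ι := hι.strictMono_of_injective ι.injective

lemma iota_abs (q : ℝ) : |ι q| = ι |q| := by
  rcases abs_cases q with ⟨h, hq⟩ | ⟨h, hq⟩
  · rw [h, abs_of_nonneg]
    simpa using (iota_strictMono ι hι).monotone hq
  · rw [h, map_neg, abs_of_nonpos]
    have := (iota_strictMono ι hι).monotone (le_of_lt hq)
    simpa using this

variable (ε : K) (hε : 0 < ε) (hinf : ∀ r : ℝ, 0 < r → ε < ι r)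
include hε hinf

lemma base_lemma (p M : ℝ) (hM : 0 ≤ M) (c : K) (hc : |c| ≤ ι M * ε) :
    0 ≤ ι p + c ↔ 0 < p ∨ (p = 0 ∧ 0 ≤ c) := by
  have hsm := iota_strictMono ι hι
  have hιM : (0:K) ≤ ι M := by simpa using hsm.monotone hM
  rcases lt_trichotomy p 0 with hp | hp | hp
  · have hMe : ι M * ε < ι (-p) := by
      have h1 : ε < ι (-p / (M + 1)) := hinf _ (div_pos (by linarith) (by linarith))
      calc ι M * ε ≤ ι M * ι (-p / (M + 1)) := by
            exact mul_le_mul_of_nonneg_left h1.le hιM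
        _ = ι (M * (-p / (M + 1))) := by rw [map_mul]
        _ < ι (-p) := by
            apply hsm
            rw [mul_div_assoc', div_lt_iff₀ (by linarith)]
            nlinarith
    have : ι p + c < 0 := by
      have h2 : c ≤ ι M * ε := (abs_le.mp hc).2
      have h3 : ι (-p) = -ι p := map_neg ι p
      linarith
    constructor
    · intro h; linarith
    · rintro (h | ⟨h, _⟩) <;> linarith
  · subst hp; simp
  · have hMe : ι M * ε < ι p := by
      have h1 : ε < ι (p / (M + 1)) := hinf _ (div_pos hp (by linarith))
      calc ι M * ε ≤ ι M * ι (p / (M + 1)) := mul_le_mul_of_nonneg_left h1.le hιM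
        _ = ι (M * (p / (M + 1))) := by rw [map_mul]
        _ < ι p := by
            apply hsm
            rw [mul_div_assoc', div_lt_iff₀ (by linarith)]
            nlinarith
    have h2 : -(ι M * ε) ≤ c := (abs_le.mp hc).1
    constructor
    · intro _; exact Or.inl hp
    · intro _; linarith

lemma signK (p q r : ℝ) (k : ℕ) (hk : 2 ≤ k) :
    0 ≤ ι p + ι q * ε + ι r * ε ^ k ↔
      (0 < p ∨ (p = 0 ∧ (0 < q ∨ (q = 0 ∧ 0 ≤ r)))) := by
  have hsm := iota_strictMono ι hι
  have hε1 : ε < 1 := by simpa using hinf 1 one_pos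
  have hεk : ε ^ (k - 1) ≤ 1 := pow_le_one₀ hε.le hε1.le
  have hεk' : ε ^ (k - 1) ≤ ε :=
    pow_le_of_le_one hε.le hε1.le (by omega)
  have hkk : ε ^ k = ε ^ (k - 1) * ε := by
    rw [← pow_succ]; congr 1; omega
  set c : K := ι q * ε + ι r * ε ^ k with hc
  have hcf : c = (ι q + ι r * ε ^ (k - 1)) * ε := by rw [hc, hkk]; ring
  have habs : |c| ≤ ι (|q| + |r|) * ε := by
    rw [hcf, abs_mul, abs_of_pos hε, map_add]
    apply mul_le_mul_of_nonneg_right _ hε.le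
    calc |ι q + ι r * ε ^ (k - 1)| ≤ |ι q| + |ι r * ε ^ (k - 1)| := abs_add_le _ _
      _ = |ι q| + |ι r| * ε ^ (k - 1) := by
          rw [abs_mul, abs_of_nonneg (pow_nonneg hε.le _)]
      _ ≤ |ι q| + |ι r| := by nlinarith [abs_nonneg (ι r)]
      _ = ι |q| + ι |r| := by rw [iota_abs ι hι, iota_abs ι hι]
  have h1 : 0 ≤ ι p + c ↔ 0 < p ∨ (p = 0 ∧ 0 ≤ c) :=
    base_lemma ι hι ε hε hinf p (|q| + |r|) (by positivity) c habs
  have habs2 : |ι r * ε ^ (k - 1)| ≤ ι |r| * ε := by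
    rw [abs_mul, abs_of_nonneg (pow_nonneg hε.le _), iota_abs ι hι]
    exact mul_le_mul_of_nonneg_left hεk' (by rw [← iota_abs ι hι]; exact abs_nonneg _)
  have h2 : 0 ≤ ι q + ι r * ε ^ (k - 1) ↔ 0 < q ∨ (q = 0 ∧ 0 ≤ ι r * ε ^ (k - 1)) :=
    base_lemma ι hι ε hε hinf q |r| (abs_nonneg _) _ habs2
  have h3 : 0 ≤ c ↔ 0 ≤ ι q + ι r * ε ^ (k - 1) := by
    rw [hcf]
    constructor
    · intro h
      by_contra hneg
      push_neg at hneg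
      nlinarith
    · exact fun h => mul_nonneg h hε.le
  have h4 : 0 ≤ ι r * ε ^ (k - 1) ↔ 0 ≤ r := by
    constructor
    · intro h
      by_contra hr
      push_neg at hr
      have : ι r < 0 := by simpa using hsm hr
      nlinarith [pow_pos hε (k - 1)]
    · intro h
      exact mul_nonneg (by simpa using hsm.monotone h) (pow_nonneg hε.le _)
  have : ι p + ι q * ε + ι r * ε ^ k = ι p + c := by rw [hc]; ring
  rw [this, h1]
  rw [h3, h2, h4]

lemma exp_iff (k : ℕ) (hk : 2 ≤ k) (p : Fin 4 → K)
    (h : p 0 = 1 - 2 * ε + ε ^ k ∧ p 1 = ε - ε ^ k ∧ p 2 = ε - ε ^ k ∧ p 3 = ε ^ k)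
    (X Y : Fin 4 → ℝ) :
    ((∑ w, p w * ι (X w)) ≤ (∑ w, p w * ι (Y w))) ↔
      (0 < Y 0 - X 0 ∨ ((Y 0 - X 0) = 0 ∧
        (0 < (Y 1 + Y 2 - 2 * Y 0) - (X 1 + X 2 - 2 * X 0) ∨
          ((Y 1 + Y 2 - 2 * Y 0) - (X 1 + X 2 - 2 * X 0) = 0 ∧
            0 ≤ (Y 0 - Y 1 - Y 2 + Y 3) - (X 0 - X 1 - X 2 + X 3))))) := by
  obtain ⟨h0, h1, h2', h3⟩ := h
  rw [← sub_nonneg, Fin.sum_univ_four, Fin.sum_univ_four, h0, h1, h2', h3]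
  rw [← signK ι hι ε hε hinf (Y 0 - X 0)
    ((Y 1 + Y 2 - 2 * Y 0) - (X 1 + X 2 - 2 * X 0))
    ((Y 0 - Y 1 - Y 2 + Y 3) - (X 0 - X 1 - X 2 + X 3)) k hk]
  constructor <;> intro hh <;> [skip; skip] <;>
  · have e : (1 - 2 * ε + ε ^ k) * ι (Y 0) + (ε - ε ^ k) * ι (Y 1) + (ε - ε ^ k) * ι (Y 2) +
        ε ^ k * ι (Y 3) - ((1 - 2 * ε + ε ^ k) * ι (X 0) + (ε - ε ^ k) * ι (X 1) +
        (ε - ε ^ k) * ι (X 2) + ε ^ k * ι (X 3)) =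
        ι (Y 0 - X 0) + ι ((Y 1 + Y 2 - 2 * Y 0) - (X 1 + X 2 - 2 * X 0)) * ε +
        ι ((Y 0 - Y 1 - Y 2 + Y 3) - (X 0 - X 1 - X 2 + X 3)) * ε ^ k := by
      simp only [map_sub, map_add, map_mul, map_ofNat]
      ring
    first
    | (rw [e] at hh ⊢; exact hh)
    | (rw [e]; exact hh)
    | (rw [e] at hh; exact hh)

end aux

/-- Let `W = {w₁,w₂,w₃,w₄}` (here `Fin 4`), `ε` a positive infinitesimal in a
non-Archimedean ordered field extension of `ℝ`, and `ν₁, ν₂` the nonstandard probability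
measures with `ν₁ = (1-2ε+ε², ε-ε², ε-ε², ε²)` and `ν₂ = (1-2ε+ε³, ε-ε³, ε-ε³, ε³)`.
With `U = {w₂,w₄}` and `V = {w₃,w₄}`: `U` and `V` are independent with respect to `ν₁`
but not with respect to `ν₂`, even though `ν₁ ≈ ν₂` (the two measures induce the same
comparison of expected values on all real-valued random variables). -/
theorem stmt18 {K : Type*} [Field K] [LinearOrder K] [IsStrictOrderedRing K] (ι : ℝ →+* K) (hι : Monotone ι)
    (ε : K) (hε : 0 < ε) (hinf : ∀ r : ℝ, 0 < r → ε < ι r)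
    (p₁ p₂ : Fin 4 → K)
    (h₁ : p₁ 0 = 1 - 2 * ε + ε ^ 2 ∧ p₁ 1 = ε - ε ^ 2 ∧ p₁ 2 = ε - ε ^ 2 ∧ p₁ 3 = ε ^ 2)
    (h₂ : p₂ 0 = 1 - 2 * ε + ε ^ 3 ∧ p₂ 1 = ε - ε ^ 3 ∧ p₂ 2 = ε - ε ^ 3 ∧ p₂ 3 = ε ^ 3) :
    (∑ i ∈ ({1, 3} : Finset (Fin 4)) ∩ ({2, 3} : Finset (Fin 4)), p₁ i) =
        (∑ i ∈ ({1, 3} : Finset (Fin 4)), p₁ i) * (∑ i ∈ ({2, 3} : Finset (Fin 4)), p₁ i) ∧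
    (∑ i ∈ ({1, 3} : Finset (Fin 4)) ∩ ({2, 3} : Finset (Fin 4)), p₂ i) ≠
        (∑ i ∈ ({1, 3} : Finset (Fin 4)), p₂ i) * (∑ i ∈ ({2, 3} : Finset (Fin 4)), p₂ i) ∧
    (∀ X Y : Fin 4 → ℝ,
      ((∑ w, p₁ w * ι (X w)) ≤ (∑ w, p₁ w * ι (Y w)) ↔
       (∑ w, p₂ w * ι (X w)) ≤ (∑ w, p₂ w * ι (Y w)))) := by
  have hint : ({1, 3} : Finset (Fin 4)) ∩ ({2, 3} : Finset (Fin 4)) = {3} := by decide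
  have hε1 : ε < 1 := by simpa using hinf 1 one_pos
  obtain ⟨a0, a1, a2, a3⟩ := h₁
  obtain ⟨b0, b1, b2, b3⟩ := h₂
  refine ⟨?_, ?_, ?_⟩
  · rw [hint]
    rw [Finset.sum_singleton, Finset.sum_pair (by decide), Finset.sum_pair (by decide)]
    rw [a1, a2, a3]; ring
  · rw [hint]
    rw [Finset.sum_singleton, Finset.sum_pair (by decide), Finset.sum_pair (by decide)]
    rw [b1, b2, b3]
    intro h
    nlinarith [pow_pos hε 2, pow_pos hε 3]
  · intro X Y
    rw [exp_iff ι hι ε hε hinf 2 (by norm_num) p₁ ⟨a0, a1, a2, a3⟩ X Y,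
      exp_iff ι hι ε hε hinf 3 (by norm_num) p₂ ⟨b0, b1, b2, b3⟩ X Y]
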